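/- There is an absolute constant C such that for every integer q ≥ 3, every real x with 2 ≤ x ≤ q, every positive integer k with x^k ≤ q / log q, and every complex-valued function a on the primes: Σ_{χ ∈ X_q} | Σ_{p ≤ x, p prime} a(p) χ(p) p^{-1/2} |^{2k} ≤ C · φ(q) · k! · ( Σ_{p ≤ x, p prime} |a(p)|^2 / p )^k. -/

import Mathlib

open scoped BigOperators Classical
open Complex

noncomputable section

/-- The finset of primes `p ≤ x`. -/
def primesLE (x : ℝ) : Finset ℕ :=
  (Finset.range (Nat.floor x + 1)).filter Nat.Prime

/-- The finset of primes `y < p ≤ x`. -/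
def primesIoc (y x : ℝ) : Finset ℕ :=
  (primesLE x).filter (fun p => y < (p : ℝ))

/-- The exponents `c_j`: `c_0 = 0`, `c_j = e^j / (log log q)^2`. -/
def cExp (q j : ℕ) : ℝ := if j = 0 then 0 else Real.exp j / (Real.log (Real.log q)) ^ 2

/-- `P_j = q ^ (c_j)`. -/
def Pparam (q j : ℕ) : ℝ := (q : ℝ) ^ (cExp q j)

/-- `K_j = c_j ^ (-3/4)`. -/
def Kparam (q j : ℕ) : ℝ := (cExp q j) ^ (-(3 : ℝ) / 4)

/-- The Dirichlet polynomial `P_{j,x}(s, χ)`. -/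
def Ppoly (q : ℕ) (χ : DirichletCharacter ℂ q) (j : ℕ) (x : ℝ) (s : ℂ) : ℂ :=
  if j = 1 then
    (∑ p ∈ primesLE (Pparam q 1),
      χ (p : ZMod q) * (p : ℂ) ^ (-s - 1 / (Real.log x : ℂ)) *
        ((Real.log (x / p) / Real.log x : ℝ) : ℂ))
    + ∑ p ∈ primesLE (Real.log q), χ ((p : ZMod q) ^ 2) / (2 * (p : ℂ) ^ (2 * s))
  else
    ∑ p ∈ primesIoc (Pparam q (j - 1)) (Pparam q j),
      χ (p : ZMod q) * (p : ℂ) ^ (-s - 1 / (Real.log x : ℂ)) *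
        ((Real.log (x / p) / Real.log x : ℝ) : ℂ)

/-- The truncated exponential `N_{j,x}(s, χ; β)`. -/
def Npoly (q : ℕ) (χ : DirichletCharacter ℂ q) (astar : ℝ) (j : ℕ) (x : ℝ) (s : ℂ)
    (β : ℝ) : ℂ :=
  ∑ n ∈ Finset.range (Nat.floor (100 * astar ^ 2 * Kparam q j) + 1),
    (β : ℂ) ^ n * (Ppoly q χ j x s) ^ n / (n.factorial : ℂ)

/-- `N_x(s, χ; β) = ∏_{j=1}^R N_{j,x}(s, χ; β)`. -/
def NpolyFull (q : ℕ) (χ : DirichletCharacter ℂ q) (astar : ℝ) (R : ℕ) (x : ℝ) (s : ℂ)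
    (β : ℝ) : ℂ :=
  ∏ j ∈ Finset.Icc 1 R, Npoly q χ astar j x s β

/-- The conjugate Dirichlet character. -/
def conjChar {q : ℕ} (χ : DirichletCharacter ℂ q) : DirichletCharacter ℂ q :=
  χ.ringHomComp (starRingEnd ℂ)

/-- GRH for the modulus `q`: all nontrivial zeros of all Dirichlet `L`-functions mod `q`
lie on the critical line. -/
def GRHmod (q : ℕ) [NeZero q] : Prop :=
  ∀ χ : DirichletCharacter ℂ q, ∀ s : ℂ,
    0 < s.re → s.re < 1 → DirichletCharacter.LFunction χ s = 0 → s.re = 1 / 2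

/-- The number of primitive Dirichlet characters mod `q`. -/
def phiStar (q : ℕ) : ℕ := Nat.card {χ : DirichletCharacter ℂ q // χ.IsPrimitive}

/-- The set `T_k` of primitive characters with all `P_{j,P_R}(1/2 + i t_m, χ)` small. -/
def Tset (q : ℕ) (k : ℕ) (R : ℕ) (t : ℕ → ℝ) : Finset (DirichletCharacter ℂ q) :=
  Finset.univ.filter (fun χ => χ.IsPrimitive ∧
    ∀ j ∈ Finset.Icc 1 R, ∀ m ∈ Finset.Icc 1 k,
      ‖Ppoly q χ j (Pparam q R) (1 / 2 + (t m : ℂ) * I)‖ ≤ Kparam q j)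


lemma card_perm_fiber {k : ℕ} (f : Fin k → ℕ) (s : Finset (Fin k → ℕ))
    (hs : ∀ g ∈ s, (List.ofFn g).Perm (List.ofFn f)) : s.card ≤ k.factorial := by
  classical
  calc s.card ≤ (List.ofFn f).permutations.toFinset.card := by
        refine Finset.card_le_card_of_injOn (fun g => List.ofFn g) (fun g hg => ?_)
          (fun g1 _ g2 _ h => List.ofFn_injective h)
        rw [Finset.mem_coe, List.mem_toFinset, List.mem_permutations]
        exact hs g hg
    _ ≤ (List.ofFn f).permutations.length := (List.ofFn f).permutations.toFinset_card_le
    _ = k.factorial := by rw [List.length_permutations, List.length_ofFn]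

lemma conj_char_eq {q : ℕ} [NeZero q] (b : ZMod q) (hb : IsUnit b)
    (χ : DirichletCharacter ℂ q) : (starRingEnd ℂ) (χ b) = χ b⁻¹ := by
  have h1 : χ b⁻¹ * χ b = 1 := by
    rw [← map_mul, ZMod.inv_mul_of_unit _ hb, map_one]
  have hn : ‖χ b‖ = 1 := by
    have := DirichletCharacter.unit_norm_eq_one χ hb.unit
    rwa [hb.unit_spec] at this
  have h2 : (starRingEnd ℂ) (χ b) * χ b = 1 := by
    rw [mul_comm, Complex.mul_conj, ← Complex.sq_norm, hn]; norm_num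
  have hz : χ b ≠ 0 := fun h => by simp [h] at h2
  exact mul_right_cancel₀ hz (h2.trans h1.symm)


theorem mean_value_prime_dirichlet_polynomial :
    ∃ C : ℝ, 0 < C ∧
      ∀ q : ℕ, 3 ≤ q → ∀ x : ℝ, 2 ≤ x → x ≤ q →
      ∀ k : ℕ, 0 < k → x ^ (k : ℝ) ≤ (q : ℝ) / Real.log q →
      ∀ a : ℕ → ℂ,
      (∑ χ : DirichletCharacter ℂ q,
          ‖∑ p ∈ primesLE x,
              a p * χ (p : ZMod q) * (p : ℂ) ^ (-(1 / 2 : ℂ))‖ ^ (2 * k))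
        ≤ C * (Nat.totient q : ℝ) * (Nat.factorial k) *
            (∑ p ∈ primesLE x, ‖a p‖ ^ 2 / p) ^ k := by
  classical
  refine ⟨1, one_pos, ?_⟩
  intro q hq x hx2 hxq k hk hxk a
  haveI : NeZero q := ⟨by omega⟩
  set P : Finset ℕ := primesLE x with hP
  have hPmem : ∀ p ∈ P, Nat.Prime p ∧ (p : ℝ) ≤ x := by
    intro p hp
    simp only [hP, primesLE, Finset.mem_filter, Finset.mem_range] at hp
    refine ⟨hp.2, ?_⟩
    have h1 : p ≤ Nat.floor x := Nat.lt_succ_iff.mp hp.1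
    calc (p : ℝ) ≤ Nat.floor x := by exact_mod_cast h1
      _ ≤ x := Nat.floor_le (by linarith)
  set F := Fintype.piFinset (fun _ : Fin k => P) with hF
  set u : (Fin k → ℕ) → ℂ := fun f => ∏ i, (a (f i) * (f i : ℂ) ^ (-(1 / 2 : ℂ))) with hu
  set w : (Fin k → ℕ) → ℝ := fun f => ∏ i, (‖a (f i)‖ ^ 2 / (f i : ℝ)) with hw
  set nn : (Fin k → ℕ) → ℕ := fun f => ∏ i, f i with hnn
  have hFmem : ∀ f ∈ F, ∀ i, (f i).Prime ∧ ((f i : ℝ)) ≤ x := by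
    intro f hf i
    exact hPmem _ (Fintype.mem_piFinset.mp hf i)
  have hlog : 1 < Real.log q := by
    have h3 : Real.log 3 ≤ Real.log q := Real.log_le_log (by norm_num) (by exact_mod_cast hq)
    have h4 : 1 < Real.log 3 := by
      rw [show (1:ℝ) = Real.log (Real.exp 1) by rw [Real.log_exp]]
      exact Real.log_lt_log (Real.exp_pos 1) (by linarith [Real.exp_one_lt_d9])
    linarith
  have hnnlt : ∀ f ∈ F, nn f < q := by
    intro f hf
    have h1 : (nn f : ℝ) ≤ x ^ k := by
      rw [hnn]
      push_cast
      calc (∏ i, (f i : ℝ)) ≤ ∏ _i : Fin k, x :=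
            Finset.prod_le_prod (fun i _ => by positivity) (fun i _ => (hFmem f hf i).2)
        _ = x ^ k := by rw [Finset.prod_const, Finset.card_univ, Fintype.card_fin]
    have h2 : (nn f : ℝ) < q := by
      have hxk' : x ^ k ≤ (q : ℝ) / Real.log q := by rwa [← Real.rpow_natCast x k]
      have h5 : (q : ℝ) / Real.log q < q := div_lt_self (by positivity) hlog
      linarith
    exact_mod_cast h2
  have hdiag : ∀ f ∈ F, ∀ g ∈ F, ((nn f : ZMod q) = (nn g : ZMod q)) → nn f = nn g := by
    intro f hf g hg h
    have h6 := congrArg ZMod.val h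
    rwa [ZMod.val_cast_of_lt (hnnlt f hf), ZMod.val_cast_of_lt (hnnlt g hg)] at h6
  have hperm : ∀ f ∈ F, ∀ g ∈ F, nn f = nn g → (List.ofFn g).Perm (List.ofFn f) := by
    intro f hf g hg h
    have hprodf : (List.ofFn f).prod = nn f := by rw [List.prod_ofFn, hnn]
    have hprodg : (List.ofFn g).prod = nn g := by rw [List.prod_ofFn, hnn]
    have hpf : ∀ p ∈ List.ofFn f, Nat.Prime p := by
      intro p hp
      obtain ⟨i, rfl⟩ := List.mem_ofFn.mp hp
      exact (hFmem f hf i).1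
    have hpg : ∀ p ∈ List.ofFn g, Nat.Prime p := by
      intro p hp
      obtain ⟨i, rfl⟩ := List.mem_ofFn.mp hp
      exact (hFmem g hg i).1
    have h1 := Nat.primeFactorsList_unique hprodf hpf
    have h2 := Nat.primeFactorsList_unique hprodg hpg
    rw [h] at h1
    exact h2.trans h1.symm
  have hSpow : ∀ χ : DirichletCharacter ℂ q,
      (∑ p ∈ P, a p * χ (p : ZMod q) * (p : ℂ) ^ (-(1 / 2 : ℂ))) ^ k
        = ∑ f ∈ F, u f * χ ((nn f : ℕ) : ZMod q) := by
    intro χ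
    have h0 : (∑ p ∈ P, a p * χ (p : ZMod q) * (p : ℂ) ^ (-(1 / 2 : ℂ))) ^ k
        = ∏ _i : Fin k, (∑ p ∈ P, a p * χ (p : ZMod q) * (p : ℂ) ^ (-(1 / 2 : ℂ))) := by
      rw [Finset.prod_const, Finset.card_univ, Fintype.card_fin]
    rw [h0, Finset.prod_univ_sum]
    refine Finset.sum_congr rfl fun f hf => ?_
    have hcast : ((nn f : ℕ) : ZMod q) = ∏ i, ((f i : ℕ) : ZMod q) := by
      rw [hnn]; push_cast; rfl
    rw [hcast, map_prod, hu]
    rw [← Finset.prod_mul_distrib]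
    exact Finset.prod_congr rfl fun i _ => by ring
  set A : ℂ := ∑ χ : DirichletCharacter ℂ q,
      (∑ f ∈ F, u f * χ ((nn f : ℕ) : ZMod q)) *
        (starRingEnd ℂ) (∑ g ∈ F, u g * χ ((nn g : ℕ) : ZMod q)) with hA
  have hLHS : ((∑ χ : DirichletCharacter ℂ q,
      ‖∑ p ∈ P, a p * χ (p : ZMod q) * (p : ℂ) ^ (-(1 / 2 : ℂ))‖ ^ (2 * k) : ℝ) : ℂ)
      = A := by
    rw [hA]
    push_cast
    refine Finset.sum_congr rfl fun χ _ => ?_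
    rw [← hSpow χ]
    set z := (∑ p ∈ P, a p * χ (p : ZMod q) * (p : ℂ) ^ (-(1 / 2 : ℂ))) with hz
    have h7 : ‖z‖ ^ (2 * k) = Complex.normSq (z ^ k) := by
      rw [Complex.normSq_eq_norm_sq, norm_pow, ← pow_mul, mul_comm]
    rw [Complex.mul_conj, ← h7]
    norm_cast
  have hO : ∀ f g : Fin k → ℕ,
      (∑ χ : DirichletCharacter ℂ q, χ ((nn f : ℕ) : ZMod q) *
        (starRingEnd ℂ) (χ ((nn g : ℕ) : ZMod q)))
      = if IsUnit ((nn g : ℕ) : ZMod q) ∧ ((nn f : ℕ) : ZMod q) = ((nn g : ℕ) : ZMod q)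
        then (q.totient : ℂ) else 0 := by
    intro f g
    by_cases hb : IsUnit ((nn g : ℕ) : ZMod q)
    · have hc : ∀ χ : DirichletCharacter ℂ q,
          χ ((nn f : ℕ) : ZMod q) * (starRingEnd ℂ) (χ ((nn g : ℕ) : ZMod q))
          = χ (((nn g : ℕ) : ZMod q))⁻¹ * χ ((nn f : ℕ) : ZMod q) := by
        intro χ
        rw [conj_char_eq _ hb, mul_comm]
      rw [Finset.sum_congr rfl fun χ _ => hc χ,
        DirichletCharacter.sum_char_inv_mul_char_eq ℂ hb ((nn f : ℕ) : ZMod q)]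
      by_cases he : ((nn f : ℕ) : ZMod q) = ((nn g : ℕ) : ZMod q)
      · rw [if_pos he.symm, if_pos ⟨hb, he⟩]
      · rw [if_neg (fun h => he h.symm), if_neg (fun h => he h.2)]
    · simp only [MulChar.map_nonunit _ hb, map_zero, mul_zero, Finset.sum_const_zero]
      rw [if_neg (fun h => hb h.1)]
  have hA2 : A = ∑ f ∈ F, ∑ g ∈ F, (u f * (starRingEnd ℂ) (u g)) *
      (if IsUnit ((nn g : ℕ) : ZMod q) ∧ ((nn f : ℕ) : ZMod q) = ((nn g : ℕ) : ZMod q)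
        then (q.totient : ℂ) else 0) := by
    rw [hA]
    have h1 : ∀ χ : DirichletCharacter ℂ q,
        (∑ f ∈ F, u f * χ ((nn f : ℕ) : ZMod q)) *
          (starRingEnd ℂ) (∑ g ∈ F, u g * χ ((nn g : ℕ) : ZMod q))
        = ∑ f ∈ F, ∑ g ∈ F, (u f * (starRingEnd ℂ) (u g)) *
            (χ ((nn f : ℕ) : ZMod q) * (starRingEnd ℂ) (χ ((nn g : ℕ) : ZMod q))) := by
      intro χ
      rw [map_sum, Finset.sum_mul_sum]
      refine Finset.sum_congr rfl fun f _ => Finset.sum_congr rfl fun g _ => ?_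
      rw [map_mul]; ring
    rw [Finset.sum_congr rfl fun χ _ => h1 χ, Finset.sum_comm]
    refine Finset.sum_congr rfl fun f _ => ?_
    rw [Finset.sum_comm]
    refine Finset.sum_congr rfl fun g _ => ?_
    rw [← Finset.mul_sum, hO f g]
  have hwnonneg : ∀ f, 0 ≤ w f := by
    intro f
    rw [hw]
    exact Finset.prod_nonneg fun i _ => by positivity
  have huw : ∀ f ∈ F, ‖u f‖ ^ 2 = w f := by
    intro f hf
    rw [hu, hw]
    simp only
    rw [norm_prod, ← Finset.prod_pow]
    refine Finset.prod_congr rfl fun i _ => ?_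
    have hp0 : (0:ℝ) < (f i : ℝ) := by exact_mod_cast (hFmem f hf i).1.pos
    have hc : ‖(f i : ℂ) ^ (-(1 / 2 : ℂ))‖ = (f i : ℝ) ^ (-(1/2) : ℝ) := by
      have hcc : ((f i : ℕ) : ℂ) = ((((f i : ℕ) : ℝ)) : ℂ) := by push_cast; rfl
      rw [hcc, Complex.norm_cpow_eq_rpow_re_of_pos hp0]
      norm_num
    rw [norm_mul, mul_pow, hc, ← Real.rpow_natCast ((f i:ℝ) ^ (-(1/2) : ℝ)) 2,
      ← Real.rpow_mul hp0.le]
    rw [show (-(1/2) : ℝ) * ((2:ℕ) : ℝ) = -1 by norm_num, Real.rpow_neg_one, div_eq_mul_inv]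
  have hterm : ∀ f ∈ F, ∀ g ∈ F,
      ‖(u f * (starRingEnd ℂ) (u g)) *
        (if IsUnit ((nn g : ℕ) : ZMod q) ∧ ((nn f : ℕ) : ZMod q) = ((nn g : ℕ) : ZMod q)
          then (q.totient : ℂ) else 0)‖
      ≤ (if nn f = nn g then (q.totient : ℝ) * ((w f + w g) / 2) else 0) := by
    intro f hf g hg
    by_cases hc : IsUnit ((nn g : ℕ) : ZMod q) ∧ ((nn f : ℕ) : ZMod q) = ((nn g : ℕ) : ZMod q)
    · have hnneq : nn f = nn g := hdiag f hf g hg hc.2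
      rw [if_pos hc, if_pos hnneq, norm_mul, norm_mul, Complex.norm_conj, Complex.norm_natCast]
      have h1 : ‖u f‖ * ‖u g‖ ≤ (w f + w g) / 2 := by
        nlinarith [sq_nonneg (‖u f‖ - ‖u g‖), huw f hf, huw g hg,
          norm_nonneg (u f), norm_nonneg (u g)]
      have htot : (0:ℝ) ≤ q.totient := by positivity
      nlinarith
    · rw [if_neg hc, mul_zero, norm_zero]
      split_ifs with h2
      · have := hwnonneg f; have := hwnonneg g; positivity
      · exact le_refl 0
  -- symmetry of the diagonal sum
  have hsym : ∑ f ∈ F, ∑ g ∈ F, (if nn f = nn g then w g else 0)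
      = ∑ f ∈ F, ∑ g ∈ F, (if nn f = nn g then w f else 0) := by
    rw [Finset.sum_comm]
    exact Finset.sum_congr rfl fun f _ => Finset.sum_congr rfl fun g _ =>
      if_congr eq_comm rfl rfl
  have hsplit : ∀ f g : Fin k → ℕ,
      (if nn f = nn g then (q.totient : ℝ) * ((w f + w g) / 2) else 0)
      = (q.totient : ℝ) / 2 *
        ((if nn f = nn g then w f else 0) + (if nn f = nn g then w g else 0)) := by
    intro f g; split_ifs <;> ring
  have hinner : ∀ f ∈ F, ∑ g ∈ F, (if nn f = nn g then w f else 0)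
      ≤ (k.factorial : ℝ) * w f := by
    intro f hf
    rw [← Finset.sum_filter, Finset.sum_const, nsmul_eq_mul]
    refine mul_le_mul_of_nonneg_right ?_ (hwnonneg f)
    have hcard : (F.filter (fun g => nn f = nn g)).card ≤ k.factorial := by
      refine card_perm_fiber f _ fun g hg => ?_
      obtain ⟨hg1, hg2⟩ := Finset.mem_filter.mp hg
      exact hperm f hf g hg1 hg2
    exact_mod_cast hcard
  have hWsum : ∑ f ∈ F, w f = (∑ p ∈ P, ‖a p‖ ^ 2 / p) ^ k := by
    rw [hw, hF,
      ← Finset.prod_univ_sum (fun _ : Fin k => P)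
        (fun _ p => ‖a p‖ ^ 2 / (p : ℝ)),
      Finset.prod_const, Finset.card_univ, Fintype.card_fin]
  have htotnn : (0:ℝ) ≤ (q.totient : ℝ) := by positivity
  calc (∑ χ : DirichletCharacter ℂ q,
      ‖∑ p ∈ P, a p * χ (p : ZMod q) * (p : ℂ) ^ (-(1 / 2 : ℂ))‖ ^ (2 * k))
      = A.re := by rw [← hLHS, Complex.ofReal_re]
    _ ≤ ‖A‖ := Complex.re_le_norm A
    _ ≤ ∑ f ∈ F, ∑ g ∈ F, ‖(u f * (starRingEnd ℂ) (u g)) *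
        (if IsUnit ((nn g : ℕ) : ZMod q) ∧ ((nn f : ℕ) : ZMod q) = ((nn g : ℕ) : ZMod q)
          then (q.totient : ℂ) else 0)‖ := by
        rw [hA2]
        refine le_trans (norm_sum_le _ _) ?_
        exact Finset.sum_le_sum fun f _ => norm_sum_le _ _
    _ ≤ ∑ f ∈ F, ∑ g ∈ F, (if nn f = nn g then (q.totient : ℝ) * ((w f + w g) / 2) else 0) :=
        Finset.sum_le_sum fun f hf => Finset.sum_le_sum fun g hg => hterm f hf g hg
    _ = (q.totient : ℝ) * ∑ f ∈ F, ∑ g ∈ F, (if nn f = nn g then w f else 0) := by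
        simp only [hsplit]
        simp only [← Finset.mul_sum]
        simp only [Finset.sum_add_distrib]
        rw [hsym]
        ring
    _ ≤ (q.totient : ℝ) * ((k.factorial : ℝ) * ∑ f ∈ F, w f) := by
        refine mul_le_mul_of_nonneg_left ?_ htotnn
        calc (∑ f ∈ F, ∑ g ∈ F, (if nn f = nn g then w f else 0))
            ≤ ∑ f ∈ F, (k.factorial : ℝ) * w f := Finset.sum_le_sum hinner
          _ = (k.factorial : ℝ) * ∑ f ∈ F, w f := by rw [Finset.mul_sum]
    _ = 1 * (q.totient : ℝ) * (k.factorial : ℝ) * (∑ p ∈ P, ‖a p‖ ^ 2 / p) ^ k := by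
        rw [hWsum]; ring

end
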